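/- Let d, M be natural numbers with M ≥ 2, let (μ_j)_{j=1}^M be an orthonormal family in ℝ^d, let A ∈ ℝ^{d×d} satisfy A x = 0 for every x orthogonal to all μ_1,…,μ_M, and let P = μ_1 μ_1ᵀ + μ_2 μ_2ᵀ. If ‖A μ_j − P A μ_j‖ ≤ ε for every j ∈ {1,…,M} and ‖P A μ_1‖ ≥ c for some c > 0, then ‖A − P A‖_F ≤ (√M · ε / c) · ‖A‖_F, i.e., the relative Frobenius error of the rank-≤2 approximation P A of A is at most √M ε / c. -/

import Mathlib

open scoped RealInnerProductSpace BigOperators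

/-- The Frobenius norm of a real matrix. -/
noncomputable def frobNorm {d : ℕ} (A : Matrix (Fin d) (Fin d) ℝ) : ℝ :=
  Real.sqrt (∑ i, ∑ j, (A i j) ^ 2)

lemma euclid_norm_sq {d : ℕ} (x : EuclideanSpace ℝ (Fin d)) : ‖x‖^2 = ∑ i, x i ^ 2 := by
  rw [EuclideanSpace.norm_eq, Real.sq_sqrt (by positivity)]
  simp [sq_abs]

lemma euclid_inner {d : ℕ} (x y : EuclideanSpace ℝ (Fin d)) : ⟪x,y⟫ = ∑ i, x i * y i := by
  simp [PiLp.inner_apply, RCLike.inner_apply, conj_trivial]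
  exact Finset.sum_congr rfl fun i _ => mul_comm _ _

lemma euclid_app {d : ℕ} (A : Matrix (Fin d) (Fin d) ℝ) (x : EuclideanSpace ℝ (Fin d)) (i : Fin d) :
    (Matrix.toEuclideanLin A x : EuclideanSpace ℝ (Fin d)) i = ∑ j, A i j * x j := rfl

/-- If a matrix `A` vanishes on the orthogonal complement of an orthonormal family
`μ_1, …, μ_M`, maps each `μ_j` to within `ε` of the span of `μ_1, μ_2`
(with orthogonal projection `P = μ_1 μ_1ᵀ + μ_2 μ_2ᵀ`), and `‖P A μ_1‖ ≥ c > 0`,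
then the relative Frobenius error of the rank-≤2 approximation `P * A` of `A`
is at most `√M · ε / c`. -/
theorem stmt_1 (d M : ℕ) (hM : 2 ≤ M)
    (μ : Fin M → EuclideanSpace ℝ (Fin d)) (hμ : Orthonormal ℝ μ)
    (A : Matrix (Fin d) (Fin d) ℝ)
    (hA : ∀ x : EuclideanSpace ℝ (Fin d),
      (∀ j : Fin M, ⟪μ j, x⟫ = 0) → Matrix.toEuclideanLin A x = 0)
    (P : Matrix (Fin d) (Fin d) ℝ)
    (hP : P = Matrix.vecMulVec (μ ⟨0, by omega⟩) (μ ⟨0, by omega⟩)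
            + Matrix.vecMulVec (μ ⟨1, by omega⟩) (μ ⟨1, by omega⟩))
    (ε c : ℝ) (hc : 0 < c)
    (hε : ∀ j : Fin M,
      ‖Matrix.toEuclideanLin A (μ j) - Matrix.toEuclideanLin (P * A) (μ j)‖ ≤ ε)
    (hlarge : c ≤ ‖Matrix.toEuclideanLin (P * A) (μ ⟨0, by omega⟩)‖) :
    frobNorm (A - P * A) ≤ (Real.sqrt M * ε / c) * frobNorm A := by
  set i0 : Fin M := ⟨0, by omega⟩ with hi0
  set i1 : Fin M := ⟨1, by omega⟩ with hi1
  set B : Matrix (Fin d) (Fin d) ℝ := A - P * A with hB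
  have horth : ∀ k k' : Fin M, ⟪μ k, μ k'⟫ = if k = k' then 1 else 0 :=
    fun k k' => orthonormal_iff_ite.mp hμ k k'
  have hε0 : 0 ≤ ε := le_trans (norm_nonneg _) (hε i0)
  have hεB : ∀ j : Fin M, ‖Matrix.toEuclideanLin B (μ j)‖ ≤ ε := by
    intro j
    have : Matrix.toEuclideanLin B (μ j)
        = Matrix.toEuclideanLin A (μ j) - Matrix.toEuclideanLin (P * A) (μ j) := by
      rw [hB, map_sub]; rfl
    rw [this]; exact hε j
  -- B kills the orthogonal complement
  have hBkill : ∀ x : EuclideanSpace ℝ (Fin d),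
      (∀ j : Fin M, ⟪μ j, x⟫ = 0) → Matrix.toEuclideanLin B x = 0 := by
    intro x hx
    have hAx : Matrix.toEuclideanLin A x = 0 := hA x hx
    have hPAx : Matrix.toEuclideanLin (P * A) x = 0 := by
      ext i
      have : ∀ j, (Matrix.toEuclideanLin A x : EuclideanSpace ℝ (Fin d)) j = 0 := by
        rw [hAx]; intro j; rfl
      simp only [euclid_app] at this ⊢
      simp only [Matrix.mul_apply, Finset.sum_mul, Finset.mul_sum]
      rw [Finset.sum_comm]
      have h4 : ∀ k, ∑ j, P i k * A k j * x j = P i k * ∑ j, A k j * x j := by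
        intro k; rw [Finset.mul_sum]; exact Finset.sum_congr rfl fun j _ => by ring
      simp only [h4, this, mul_zero, Finset.sum_const_zero]
      rfl
    have : Matrix.toEuclideanLin B x
        = Matrix.toEuclideanLin A x - Matrix.toEuclideanLin (P * A) x := by
      rw [hB, map_sub]; rfl
    rw [this, hAx, hPAx, sub_zero]
  -- Parseval per row
  have key : ∀ i : Fin d, ∑ j, (B i j)^2 = ∑ k : Fin M, (∑ j, B i j * μ k j)^2 := by
    intro i
    set cl : Fin M → ℝ := fun k => ∑ j, B i j * μ k j with hcl
    set x : EuclideanSpace ℝ (Fin d) :=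
      (WithLp.equiv 2 (Fin d → ℝ)).symm (fun j => B i j - ∑ k, cl k * μ k j) with hx
    have hxj : ∀ j, x j = B i j - ∑ k, cl k * μ k j := fun j => rfl
    have hxorth : ∀ k : Fin M, ⟪μ k, x⟫ = 0 := by
      intro k
      rw [euclid_inner]
      simp only [hxj, mul_sub, Finset.sum_sub_distrib, Finset.mul_sum]
      have h1 : ∑ j, μ k j * B i j = cl k := by
        rw [hcl]; exact Finset.sum_congr rfl fun j _ => mul_comm _ _
      have h2 : ∑ j, ∑ k', μ k j * (cl k' * μ k' j) = cl k := by
        rw [Finset.sum_comm]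
        have : ∀ k' : Fin M, ∑ j, μ k j * (cl k' * μ k' j) = cl k' * ⟪μ k, μ k'⟫ := by
          intro k'
          rw [euclid_inner, Finset.mul_sum]
          exact Finset.sum_congr rfl fun j _ => by ring
        simp only [this, horth]
        simp
      rw [h1, h2, sub_self]
    have h0 := hBkill x hxorth
    have h0i : ∑ j, B i j * x j = 0 := by
      have := congrArg (fun v => v i) h0
      simpa [euclid_app] using this
    simp only [hxj, mul_sub, Finset.sum_sub_distrib, sub_eq_zero] at h0i
    have h3 : ∑ j, B i j * ∑ k, cl k * μ k j = ∑ k, (cl k)^2 := by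
      have : ∀ j, B i j * ∑ k, cl k * μ k j = ∑ k, cl k * (B i j * μ k j) := by
        intro j; rw [Finset.mul_sum]; exact Finset.sum_congr rfl fun k _ => by ring
      simp only [this]
      rw [Finset.sum_comm]
      refine Finset.sum_congr rfl fun k _ => ?_
      rw [← Finset.mul_sum]
      have hclk : (∑ j, B i j * μ k j) = cl k := rfl
      rw [hclk]; ring
    calc ∑ j, (B i j)^2 = ∑ j, B i j * B i j := by simp [sq]
      _ = ∑ j, B i j * ∑ k, cl k * μ k j := h0i
      _ = ∑ k, (cl k)^2 := h3
  -- Frobenius norm of B squared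
  have frobB_sq : ∑ i, ∑ j, (B i j)^2 = ∑ k : Fin M, ‖Matrix.toEuclideanLin B (μ k)‖^2 := by
    simp only [key, euclid_norm_sq, euclid_app]
    rw [Finset.sum_comm]
  have hBbound : frobNorm B ≤ Real.sqrt M * ε := by
    rw [frobNorm, frobB_sq]
    have : ∑ k : Fin M, ‖Matrix.toEuclideanLin B (μ k)‖^2 ≤ (M : ℝ) * ε^2 := by
      calc ∑ k : Fin M, ‖Matrix.toEuclideanLin B (μ k)‖^2 ≤ ∑ _k : Fin M, ε^2 :=
            Finset.sum_le_sum fun k _ => pow_le_pow_left₀ (norm_nonneg _) (hεB k) 2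
        _ = (M : ℝ) * ε^2 := by simp [mul_comm]
    calc Real.sqrt (∑ k : Fin M, ‖Matrix.toEuclideanLin B (μ k)‖^2)
        ≤ Real.sqrt ((M : ℝ) * ε^2) := Real.sqrt_le_sqrt this
      _ = Real.sqrt M * ε := by
          rw [Real.sqrt_mul (Nat.cast_nonneg M), Real.sqrt_sq hε0]
  -- c ≤ frobNorm A
  have hcA : c ≤ frobNorm A := by
    set y : EuclideanSpace ℝ (Fin d) := Matrix.toEuclideanLin A (μ i0) with hy
    have hPAy : ∀ i, (Matrix.toEuclideanLin (P * A) (μ i0) : EuclideanSpace ℝ (Fin d)) i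
        = ⟪μ i0, y⟫ * μ i0 i + ⟪μ i1, y⟫ * μ i1 i := by
      intro i
      rw [euclid_app]
      have : ∀ j, (P * A) i j = ∑ k, P i k * A k j := fun j => Matrix.mul_apply
      simp only [this, Finset.sum_mul, Finset.mul_sum]
      rw [Finset.sum_comm]
      have : ∀ k, ∑ j, P i k * A k j * μ i0 j = P i k * y k := by
        intro k
        rw [hy, euclid_app, Finset.mul_sum]
        exact Finset.sum_congr rfl fun j _ => by ring
      simp only [this]
      rw [hP]
      simp only [Matrix.add_apply, Matrix.vecMulVec_apply, euclid_inner]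
      simp only [add_mul, Finset.sum_add_distrib, Finset.sum_mul, Finset.mul_sum]
      congr 1
      · exact Finset.sum_congr rfl fun k _ => by ring
      · exact Finset.sum_congr rfl fun k _ => by ring
    have hPAnorm : ‖Matrix.toEuclideanLin (P * A) (μ i0)‖^2 = ⟪μ i0, y⟫^2 + ⟪μ i1, y⟫^2 := by
      rw [euclid_norm_sq]
      simp only [hPAy]
      have expand : ∀ i, (⟪μ i0, y⟫ * μ i0 i + ⟪μ i1, y⟫ * μ i1 i)^2
          = ⟪μ i0, y⟫^2 * (μ i0 i * μ i0 i) + ⟪μ i1, y⟫^2 * (μ i1 i * μ i1 i)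
            + (2 * ⟪μ i0, y⟫ * ⟪μ i1, y⟫) * (μ i0 i * μ i1 i) := fun i => by ring
      simp only [expand, Finset.sum_add_distrib, ← Finset.mul_sum]
      have e00 : ∑ i, μ i0 i * μ i0 i = 1 := by
        have := horth i0 i0; rw [euclid_inner] at this; simpa using this
      have e11 : ∑ i, μ i1 i * μ i1 i = 1 := by
        have := horth i1 i1; rw [euclid_inner] at this; simpa using this
      have e01 : ∑ i, μ i0 i * μ i1 i = 0 := by
        have := horth i0 i1; rw [euclid_inner] at this
        have hne : i0 ≠ i1 := by simp [hi0, hi1, Fin.ext_iff]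
        simpa [hne] using this
      rw [e00, e11, e01]; ring
      
    have bessel : ⟪μ i0, y⟫^2 + ⟪μ i1, y⟫^2 ≤ ‖y‖^2 := by
      have hne : i0 ≠ i1 := by simp [hi0, hi1, Fin.ext_iff]
      have := hμ.sum_inner_products_le (s := {i0, i1}) y
      rw [Finset.sum_pair hne] at this
      simpa [Real.norm_eq_abs, sq_abs] using this
    have hyA : ‖y‖ ≤ frobNorm A := by
      have h1 : ‖y‖^2 ≤ ∑ i, ∑ j, (A i j)^2 := by
        rw [euclid_norm_sq]
        have : ∀ i, (y i)^2 ≤ (∑ j, (A i j)^2) * (∑ j, (μ i0 j)^2) := by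
          intro i
          rw [hy, euclid_app]
          exact Finset.sum_mul_sq_le_sq_mul_sq _ _ _
        have hμ1 : ∑ j, (μ i0 j)^2 = 1 := by
          have := horth i0 i0; rw [euclid_inner] at this; simpa [sq] using this
        calc ∑ i, (y i)^2 ≤ ∑ i, (∑ j, (A i j)^2) * (∑ j, (μ i0 j)^2) :=
              Finset.sum_le_sum fun i _ => this i
          _ = ∑ i, ∑ j, (A i j)^2 := by simp [hμ1]
      rw [frobNorm]
      have := Real.sqrt_le_sqrt h1
      rwa [Real.sqrt_sq (norm_nonneg _)] at this
    have hPy : ‖Matrix.toEuclideanLin (P * A) (μ i0)‖ ≤ ‖y‖ := by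
      have h2 : ‖Matrix.toEuclideanLin (P * A) (μ i0)‖^2 ≤ ‖y‖^2 := by
        rw [hPAnorm]; exact bessel
      exact (pow_le_pow_iff_left₀ (norm_nonneg _) (norm_nonneg _) two_ne_zero).mp h2
    exact hlarge.trans (hPy.trans hyA)
  have hnn : 0 ≤ Real.sqrt M * ε / c :=
    div_nonneg (mul_nonneg (Real.sqrt_nonneg _) hε0) hc.le
  calc frobNorm (A - P * A) = frobNorm B := rfl
    _ ≤ Real.sqrt M * ε := hBbound
    _ = (Real.sqrt M * ε / c) * c := by field_simp
    _ ≤ (Real.sqrt M * ε / c) * frobNorm A := mul_le_mul_of_nonneg_left hcA hnn
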